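/- Let F be a field and let φ : F[y₁, y₂, y₃] → F[x₁, x₂] be the F-algebra homomorphism with φ(y₁) = x₁, φ(y₂) = x₁²x₂³, and φ(y₃) = x₁x₂. Then the kernel of φ is the ideal generated by the single binomial y₁y₂ − y₃³. -/
import Mathlib

open MvPolynomial Finsupp

noncomputable section Stmt10Aux

variable (F : Type) [Field F]

def myI : Ideal (MvPolynomial (Fin 3) F) := Ideal.span {X 0 * X 1 - X 2 ^ 3}

def myφ : MvPolynomial (Fin 3) F →ₐ[F] MvPolynomial (Fin 2) F :=
  aeval ![X 0, X 0 ^ 2 * X 1 ^ 3, X 0 * X 1]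

lemma red (a b c k : ℕ) :
    (X 0 : MvPolynomial (Fin 3) F) ^ (a + k) * X 1 ^ (b + k) * X 2 ^ c -
      X 0 ^ a * X 1 ^ b * X 2 ^ (c + 3 * k) ∈ myI F := by
  induction k generalizing a b with
  | zero => simp
  | succ k ih =>
      have h1 := ih (a + 1) (b + 1)
      have h2 : (X 0 : MvPolynomial (Fin 3) F) ^ a * X 1 ^ b * X 2 ^ (c + 3 * k) *
          (X 0 * X 1 - X 2 ^ 3) ∈ myI F :=
        Ideal.mul_mem_left _ _ (Ideal.subset_span rfl)
      have := (myI F).add_mem h1 h2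
      convert this using 1
      ring

lemma mono_eq3 (e : Fin 3 →₀ ℕ) (c : F) :
    monomial e c = C c * X 0 ^ e 0 * X 1 ^ e 1 * X 2 ^ e 2 := by
  rw [monomial_eq, Finsupp.prod_fintype _ _ (fun i => pow_zero _), Fin.prod_univ_three]
  ring

lemma mono_eq2 (e : Fin 2 →₀ ℕ) (c : F) :
    monomial e c = C c * X 0 ^ e 0 * X 1 ^ e 1 := by
  rw [monomial_eq, Finsupp.prod_fintype _ _ (fun i => pow_zero _), Fin.prod_univ_two]
  ring

def ψ (e : Fin 3 →₀ ℕ) : Fin 2 →₀ ℕ :=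
  Finsupp.single 0 (e 0 + 2 * e 1 + e 2) + Finsupp.single 1 (3 * e 1 + e 2)

lemma ψ_apply0 (e : Fin 3 →₀ ℕ) : ψ e 0 = e 0 + 2 * e 1 + e 2 := by
  simp [ψ, Finsupp.single_apply]

lemma ψ_apply1 (e : Fin 3 →₀ ℕ) : ψ e 1 = 3 * e 1 + e 2 := by
  simp [ψ, Finsupp.single_apply]

lemma phi_mono (e : Fin 3 →₀ ℕ) (c : F) :
    myφ F (monomial e c) = monomial (ψ e) c := by
  rw [mono_eq3, mono_eq2, ψ_apply0, ψ_apply1]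
  simp only [myφ, map_mul, map_pow, aeval_X, aeval_C, algebraMap_eq,
    Matrix.cons_val_zero, Matrix.cons_val_one, Matrix.head_cons,
    Matrix.cons_val_two, Matrix.tail_cons]
  ring

lemma ψ_inj {e d : Fin 3 →₀ ℕ} (he : e 0 = 0 ∨ e 1 = 0) (hd : d 0 = 0 ∨ d 1 = 0)
    (h : ψ e = ψ d) : e = d := by
  have h0 : e 0 + 2 * e 1 + e 2 = d 0 + 2 * d 1 + d 2 := by
    have := DFunLike.congr_fun h 0; rwa [ψ_apply0, ψ_apply0] at this
  have h1 : 3 * e 1 + e 2 = 3 * d 1 + d 2 := by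
    have := DFunLike.congr_fun h 1; rwa [ψ_apply1, ψ_apply1] at this
  have h3 : e 0 = d 0 ∧ e 1 = d 1 ∧ e 2 = d 2 := by omega
  ext i
  fin_cases i
  · exact h3.1
  · exact h3.2.1
  · exact h3.2.2

lemma normal_inj (g : MvPolynomial (Fin 3) F)
    (hn : ∀ e ∈ g.support, e 0 = 0 ∨ e 1 = 0) (h : myφ F g = 0) : g = 0 := by
  have hφg : myφ F g = ∑ e ∈ g.support, monomial (ψ e) (coeff e g) := by
    conv_lhs => rw [← g.support_sum_monomial_coeff]
    rw [map_sum]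
    exact Finset.sum_congr rfl fun e _ => phi_mono F e _
  ext d
  by_cases hd : d ∈ g.support
  · have : coeff (ψ d) (myφ F g) = coeff d g := by
      rw [hφg, coeff_sum]
      rw [Finset.sum_eq_single_of_mem d hd]
      · simp [coeff_monomial]
      · intro e he hne
        rw [coeff_monomial, if_neg]
        intro hψ
        exact hne (ψ_inj (hn e he) (hn d hd) hψ)
    rw [h] at this
    simpa using this.symm
  · simpa using MvPolynomial.notMem_support_iff.mp hd

def nf (e : Fin 3 →₀ ℕ) : Fin 3 →₀ ℕ :=
  Finsupp.single 0 (e 0 - min (e 0) (e 1)) + Finsupp.single 1 (e 1 - min (e 0) (e 1)) +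
    Finsupp.single 2 (e 2 + 3 * min (e 0) (e 1))

lemma nf_apply0 (e : Fin 3 →₀ ℕ) : nf e 0 = e 0 - min (e 0) (e 1) := by
  simp [nf, Finsupp.single_apply]
lemma nf_apply1 (e : Fin 3 →₀ ℕ) : nf e 1 = e 1 - min (e 0) (e 1) := by
  simp [nf, Finsupp.single_apply]
lemma nf_apply2 (e : Fin 3 →₀ ℕ) : nf e 2 = e 2 + 3 * min (e 0) (e 1) := by
  simp [nf, Finsupp.single_apply]

lemma nf_normal (e : Fin 3 →₀ ℕ) : nf e 0 = 0 ∨ nf e 1 = 0 := by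
  rw [nf_apply0, nf_apply1]; omega

lemma red_mono (e : Fin 3 →₀ ℕ) (c : F) :
    monomial e c - monomial (nf e) c ∈ myI F := by
  set k := min (e 0) (e 1) with hk
  have h := red F (e 0 - k) (e 1 - k) (e 2) k
  have h0 : e 0 - k + k = e 0 := by omega
  have h1 : e 1 - k + k = e 1 := by omega
  rw [h0, h1] at h
  rw [mono_eq3, mono_eq3, nf_apply0, nf_apply1, nf_apply2, ← hk]
  have := Ideal.mul_mem_left _ (C c) h
  convert this using 1
  ring

end Stmt10Aux

theorem stmt10 (F : Type) [Field F] :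
    RingHom.ker (MvPolynomial.aeval
        (![MvPolynomial.X 0,
           MvPolynomial.X 0 ^ 2 * MvPolynomial.X 1 ^ 3,
           MvPolynomial.X 0 * MvPolynomial.X 1] :
          Fin 3 → MvPolynomial (Fin 2) F) :
        MvPolynomial (Fin 3) F →ₐ[F] MvPolynomial (Fin 2) F).toRingHom =
      Ideal.span {MvPolynomial.X 0 * MvPolynomial.X 1 - MvPolynomial.X 2 ^ 3} := by
  have hIker : myI F ≤ RingHom.ker (myφ F).toRingHom := by
    rw [myI, Ideal.span_le, Set.singleton_subset_iff]
    simp only [SetLike.mem_coe, RingHom.mem_ker, AlgHom.toRingHom_eq_coe,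
      RingHom.coe_coe, map_sub, map_mul, map_pow, myφ, MvPolynomial.aeval_X,
      Matrix.cons_val_zero, Matrix.cons_val_one, Matrix.head_cons,
      Matrix.cons_val_two, Matrix.tail_cons]
    ring
  refine le_antisymm ?_ hIker
  intro f hf
  have hf0 : myφ F f = 0 := hf
  set g : MvPolynomial (Fin 3) F :=
    ∑ e ∈ f.support, MvPolynomial.monomial (nf e) (MvPolynomial.coeff e f) with hg
  have hdecomp : f - g = ∑ e ∈ f.support,
      (MvPolynomial.monomial e (MvPolynomial.coeff e f) -
        MvPolynomial.monomial (nf e) (MvPolynomial.coeff e f)) := by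
    rw [Finset.sum_sub_distrib, f.support_sum_monomial_coeff, ← hg]
  have hfg : f - g ∈ myI F := by
    rw [hdecomp]
    exact Ideal.sum_mem _ fun e _ => red_mono F e _
  have hgn : ∀ e ∈ g.support, e 0 = 0 ∨ e 1 = 0 := by
    intro e he2
    rw [hg] at he2
    obtain ⟨d, _, hd⟩ := Finset.mem_biUnion.mp (MvPolynomial.support_sum he2)
    have := MvPolynomial.support_monomial_subset hd
    rw [Finset.mem_singleton] at this
    subst this
    exact nf_normal d
  have hφfg : myφ F (f - g) = 0 := hIker hfg
  have hφg : myφ F g = 0 := by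
    have := map_sub (myφ F) f g
    rw [hφfg, hf0, zero_sub] at this
    exact neg_eq_zero.mp this.symm
  have hg0 : g = 0 := normal_inj F g hgn hφg
  rw [hg0, sub_zero] at hfg
  exact hfg
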